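/- arXiv:1502.06349 — 4 statements merged into one kernel-verified Lean document; each statement's English description precedes it below -/
import Mathlib

section
/- Let X and Y be real-valued random variables on a probability space with marginal distribution functions F(x) = P(X ≤ x) and G(y) = P(Y ≤ y) and joint distribution function H(x,y) = P(X ≤ x and Y ≤ y). If F and G are continuous, then there exists a unique copula C such that H(x,y) = C(F(x), G(y)) for all x, y ∈ ℝ. -/
open MeasureTheory

/-- A (bivariate) copula: a function `C : [0,1]² → [0,1]` (here extended as a function
`ℝ → ℝ → ℝ` whose relevant behaviour is on the unit square) satisfying the grounded,
uniform-margins and 2-increasing properties. -/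
def IsCopula (C : ℝ → ℝ → ℝ) : Prop :=
  (∀ u ∈ Set.Icc (0:ℝ) 1, ∀ v ∈ Set.Icc (0:ℝ) 1, C u v ∈ Set.Icc (0:ℝ) 1) ∧
  (∀ u ∈ Set.Icc (0:ℝ) 1, C u 0 = 0) ∧
  (∀ v ∈ Set.Icc (0:ℝ) 1, C 0 v = 0) ∧
  (∀ u ∈ Set.Icc (0:ℝ) 1, C u 1 = u) ∧
  (∀ v ∈ Set.Icc (0:ℝ) 1, C 1 v = v) ∧
  (∀ u₁ u₂ v₁ v₂ : ℝ, u₁ ∈ Set.Icc (0:ℝ) 1 → u₂ ∈ Set.Icc (0:ℝ) 1 →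
    v₁ ∈ Set.Icc (0:ℝ) 1 → v₂ ∈ Set.Icc (0:ℝ) 1 → u₁ ≤ u₂ → v₁ ≤ v₂ →
    0 ≤ C u₂ v₂ - C u₂ v₁ - C u₁ v₂ + C u₁ v₁)


open Filter Set

section SklarHelpers

section helpers
variable {Ω : Type*} [MeasurableSpace Ω] (ℙ : Measure Ω) [IsProbabilityMeasure ℙ]
variable (X : Ω → ℝ) (hX : Measurable X) (F : ℝ → ℝ)
  (hF : ∀ x, F x = (ℙ {ω | X ω ≤ x}).toReal)

include hX hF

lemma F_eq_cdf : ∀ x, F x = ProbabilityTheory.cdf (ℙ.map X) x := by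
  have : IsProbabilityMeasure (ℙ.map X) := Measure.isProbabilityMeasure_map hX.aemeasurable
  intro x
  rw [ProbabilityTheory.cdf_eq_real, measureReal_def, Measure.map_apply hX measurableSet_Iic, hF]
  rfl

lemma F_mono : Monotone F := by
  intro a b hab
  rw [hF, hF]
  exact ENNReal.toReal_mono (measure_ne_top _ _)
    (measure_mono fun ω (h : X ω ≤ a) => le_trans h hab)

lemma F_atTop : Tendsto F atTop (nhds 1) := by
  have : IsProbabilityMeasure (ℙ.map X) := Measure.isProbabilityMeasure_map hX.aemeasurable
  have h := ProbabilityTheory.tendsto_cdf_atTop (ℙ.map X)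
  have := F_eq_cdf ℙ X hX F hF
  exact h.congr fun x => (this x).symm

lemma F_atBot : Tendsto F atBot (nhds 0) := by
  have : IsProbabilityMeasure (ℙ.map X) := Measure.isProbabilityMeasure_map hX.aemeasurable
  have h := ProbabilityTheory.tendsto_cdf_atBot (ℙ.map X)
  have := F_eq_cdf ℙ X hX F hF
  exact h.congr fun x => (this x).symm

end helpers

section helpers2
variable {Ω : Type*} [MeasurableSpace Ω] (ℙ : Measure Ω) [IsProbabilityMeasure ℙ]
variable (X : Ω → ℝ) (hX : Measurable X) (F : ℝ → ℝ)
  (hF : ∀ x, F x = (ℙ {ω | X ω ≤ x}).toReal) (hFcont : Continuous F)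

include hX hF hFcont

lemma F_le_one : ∀ x, F x ≤ 1 := by
  intro x
  rw [hF]
  exact ENNReal.toReal_le_of_le_ofReal zero_le_one (by simpa using prob_le_one)

lemma F_surj : ∀ u : ℝ, 0 < u → u < 1 → ∃ x, F x = u := by
  intro u hu0 hu1
  obtain ⟨a, ha⟩ := ((F_atBot ℙ X hX F hF).eventually_lt_const hu0).exists
  obtain ⟨b, hb⟩ := ((F_atTop ℙ X hX F hF).eventually_const_lt hu1).exists
  have hab : a ≤ b := by
    by_contra h
    exact absurd (F_mono ℙ X hX F hF (le_of_not_ge h)) (not_le.mpr (ha.trans hb))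
  obtain ⟨c, _, hc⟩ := intermediate_value_Icc hab hFcont.continuousOn
    ⟨ha.le, hb.le⟩
  exact ⟨c, hc⟩

lemma F_level : ∀ u : ℝ, 0 ≤ u → u ≤ 1 → (ℙ {ω | F (X ω) ≤ u}).toReal = u := by
  intro u hu0 hu1
  rcases eq_or_lt_of_le hu1 with h1 | h1
  · have : {ω | F (X ω) ≤ u} = Set.univ := by
      ext ω; simp only [Set.mem_setOf_eq, Set.mem_univ, iff_true]
      exact (F_le_one ℙ X hX F hF hFcont (X ω)).trans h1.symm.le
    rw [this, measure_univ, ENNReal.toReal_one, ← h1]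
  obtain ⟨b, hb⟩ := ((F_atTop ℙ X hX F hF).eventually_const_lt h1).exists
  by_cases hS : {t : ℝ | F t ≤ u}.Nonempty
  · have hSc : IsClosed {t : ℝ | F t ≤ u} := isClosed_le hFcont continuous_const
    have hSb : BddAbove {t : ℝ | F t ≤ u} := by
      refine ⟨b, fun t ht => ?_⟩
      by_contra h
      exact absurd (F_mono ℙ X hX F hF (le_of_not_ge h)) (not_le.mpr (lt_of_le_of_lt ht hb))
    set x0 := sSup {t : ℝ | F t ≤ u} with hx0
    have hx0mem : x0 ∈ {t : ℝ | F t ≤ u} := hSc.csSup_mem hS hSb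
    have hset : {ω | F (X ω) ≤ u} = {ω | X ω ≤ x0} := by
      ext ω
      constructor
      · exact fun h => le_csSup hSb h
      · exact fun h => le_trans (F_mono ℙ X hX F hF h) hx0mem
    rw [hset, ← hF]
    refine le_antisymm hx0mem ?_
    by_contra h
    push_neg at h
    have hx0b : x0 ≤ b := by
      by_contra hc
      exact absurd (F_mono ℙ X hX F hF (le_of_not_ge hc)) (not_le.mpr (lt_of_le_of_lt hx0mem hb))
    obtain ⟨c, hc1, hc2⟩ := intermediate_value_Icc hx0b hFcont.continuousOn ⟨h.le, hb.le⟩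
    have : c ≤ x0 := le_csSup hSb (hc2.le.trans le_rfl)
    exact absurd (hc2 ▸ F_mono ℙ X hX F hF this) (not_le.mpr h)
  · have hset : {ω | F (X ω) ≤ u} = (∅ : Set Ω) := by
      ext ω
      simp only [Set.mem_setOf_eq, Set.mem_empty_iff_false, iff_false]
      exact fun h => hS ⟨X ω, h⟩
    have hu : u = 0 := by
      refine le_antisymm ?_ hu0
      by_contra h
      push_neg at h
      obtain ⟨a, ha⟩ := ((F_atBot ℙ X hX F hF).eventually_lt_const h).exists
      exact hS ⟨a, ha.le⟩
    rw [hset, measure_empty, hu, ENNReal.toReal_zero]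

lemma F_setMeas : ∀ u : ℝ, MeasurableSet {ω | F (X ω) ≤ u} := fun u =>
  (hFcont.measurable.comp hX) measurableSet_Iic

lemma F_event_eq : ∀ x, ℙ {ω | F (X ω) ≤ F x} = ℙ {ω | X ω ≤ x} := by
  intro x
  have h0 : 0 ≤ F x := by rw [hF]; exact ENNReal.toReal_nonneg
  have h1 := F_le_one ℙ X hX F hF hFcont x
  have := F_level ℙ X hX F hF hFcont (F x) h0 h1
  have this2 := this.trans (hF x)
  exact (ENNReal.toReal_eq_toReal_iff' (measure_ne_top _ _) (measure_ne_top _ _)).mp this2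

end helpers2

end SklarHelpers

set_option maxHeartbeats 1000000 in
/-- **Sklar's theorem** (existence and uniqueness of the copula for continuous marginals).
If `X` and `Y` are real random variables with continuous marginal distribution functions
`F`, `G` and joint distribution function `H`, then there is a copula `C`, unique on
`[0,1]²`, such that `H x y = C (F x) (G y)` for all `x, y`. -/
theorem sklar_theorem
    {Ω : Type*} [MeasurableSpace Ω] (ℙ : Measure Ω) [IsProbabilityMeasure ℙ]
    (X Y : Ω → ℝ) (hX : Measurable X) (hY : Measurable Y)
    (F G : ℝ → ℝ) (H : ℝ → ℝ → ℝ)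
    (hF : ∀ x, F x = (ℙ {ω | X ω ≤ x}).toReal)
    (hG : ∀ y, G y = (ℙ {ω | Y ω ≤ y}).toReal)
    (hH : ∀ x y, H x y = (ℙ {ω | X ω ≤ x ∧ Y ω ≤ y}).toReal)
    (hFcont : Continuous F) (hGcont : Continuous G) :
    ∃ C : ℝ → ℝ → ℝ, IsCopula C ∧ (∀ x y, H x y = C (F x) (G y)) ∧
      ∀ C' : ℝ → ℝ → ℝ, IsCopula C' → (∀ x y, H x y = C' (F x) (G y)) →
        ∀ u ∈ Set.Icc (0:ℝ) 1, ∀ v ∈ Set.Icc (0:ℝ) 1, C u v = C' u v := by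
  classical
  set A : ℝ → Set Ω := fun u => {ω | F (X ω) ≤ u} with hA
  set B : ℝ → Set Ω := fun v => {ω | G (Y ω) ≤ v} with hB
  have mA : ∀ u, MeasurableSet (A u) := F_setMeas ℙ X hX F hF hFcont
  have mB : ∀ v, MeasurableSet (B v) := F_setMeas ℙ Y hY G hG hGcont
  have monoA : ∀ {u₁ u₂}, u₁ ≤ u₂ → A u₁ ⊆ A u₂ := fun h ω hω => le_trans hω h
  have monoB : ∀ {v₁ v₂}, v₁ ≤ v₂ → B v₁ ⊆ B v₂ := fun h ω hω => le_trans hω h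
  have levelA : ∀ u : ℝ, 0 ≤ u → u ≤ 1 → (ℙ (A u)).toReal = u :=
    F_level ℙ X hX F hF hFcont
  have levelB : ∀ v : ℝ, 0 ≤ v → v ≤ 1 → (ℙ (B v)).toReal = v :=
    F_level ℙ Y hY G hG hGcont
  set C : ℝ → ℝ → ℝ := fun u v => (ℙ (A u ∩ B v)).toReal with hC
  have hCfact : ∀ x y, H x y = C (F x) (G y) := by
    intro x y
    have hAx : {ω | X ω ≤ x} ⊆ A (F x) := fun ω hω => F_mono ℙ X hX F hF hω
    have hBy : {ω | Y ω ≤ y} ⊆ B (G y) := fun ω hω => F_mono ℙ Y hY G hG hω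
    have hAnull : ℙ (A (F x) \ {ω | X ω ≤ x}) = 0 := by
      rw [measure_diff hAx (hX measurableSet_Iic).nullMeasurableSet (measure_ne_top _ _),
        F_event_eq ℙ X hX F hF hFcont, tsub_self]
    have hBnull : ℙ (B (G y) \ {ω | Y ω ≤ y}) = 0 := by
      rw [measure_diff hBy (hY measurableSet_Iic).nullMeasurableSet (measure_ne_top _ _),
        F_event_eq ℙ Y hY G hG hGcont, tsub_self]
    have hkey : ℙ {ω | X ω ≤ x ∧ Y ω ≤ y} = ℙ (A (F x) ∩ B (G y)) := by
      refine le_antisymm (measure_mono fun ω hω => ⟨hAx hω.1, hBy hω.2⟩) ?_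
      have hsub : A (F x) ∩ B (G y) ⊆
          {ω | X ω ≤ x ∧ Y ω ≤ y} ∪ ((A (F x) \ {ω | X ω ≤ x}) ∪ (B (G y) \ {ω | Y ω ≤ y})) := by
        intro ω ⟨h1, h2⟩
        by_cases hx' : X ω ≤ x
        · by_cases hy' : Y ω ≤ y
          · exact Or.inl ⟨hx', hy'⟩
          · exact Or.inr (Or.inr ⟨h2, hy'⟩)
        · exact Or.inr (Or.inl ⟨h1, hx'⟩)
      calc ℙ (A (F x) ∩ B (G y)) ≤ _ := measure_mono hsub
        _ ≤ ℙ {ω | X ω ≤ x ∧ Y ω ≤ y} +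
            ℙ ((A (F x) \ {ω | X ω ≤ x}) ∪ (B (G y) \ {ω | Y ω ≤ y})) := measure_union_le _ _
        _ = ℙ {ω | X ω ≤ x ∧ Y ω ≤ y} := by
            rw [measure_union_null hAnull hBnull, add_zero]
    rw [hH, hC, hkey]
  refine ⟨C, ⟨?_, ?_, ?_, ?_, ?_, ?_⟩, hCfact, ?_⟩
  · -- range
    intro u _ v _
    exact ⟨ENNReal.toReal_nonneg,
      ENNReal.toReal_le_of_le_ofReal zero_le_one (by simpa using prob_le_one)⟩
  · -- C u 0 = 0
    intro u _
    have h0 : ℙ (B 0) = 0 := by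
      have := levelB 0 le_rfl zero_le_one
      rwa [ENNReal.toReal_eq_zero_iff, or_iff_left (measure_ne_top _ _)] at this
    have : ℙ (A u ∩ B 0) = 0 := measure_mono_null Set.inter_subset_right h0
    simp [hC, this]
  · -- C 0 v = 0
    intro v _
    have h0 : ℙ (A 0) = 0 := by
      have := levelA 0 le_rfl zero_le_one
      rwa [ENNReal.toReal_eq_zero_iff, or_iff_left (measure_ne_top _ _)] at this
    have : ℙ (A 0 ∩ B v) = 0 := measure_mono_null Set.inter_subset_left h0
    simp [hC, this]
  · -- C u 1 = u
    intro u hu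
    have hB1 : B 1 = Set.univ := Set.eq_univ_of_forall fun ω =>
      F_le_one ℙ Y hY G hG hGcont (Y ω)
    rw [hC]
    simp only [hB1, Set.inter_univ]
    exact levelA u hu.1 hu.2
  · -- C 1 v = v
    intro v hv
    have hA1 : A 1 = Set.univ := Set.eq_univ_of_forall fun ω =>
      F_le_one ℙ X hX F hF hFcont (X ω)
    rw [hC]
    simp only [hA1, Set.univ_inter]
    exact levelB v hv.1 hv.2
  · -- 2-increasing
    intro u₁ u₂ v₁ v₂ _ _ _ _ hu hv
    have hAsub := monoA hu
    have hBsub := monoB hv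
    have hdecomp : ∀ s : Set Ω, MeasurableSet s →
        ℙ (s ∩ B v₂) = ℙ (s ∩ B v₁) + ℙ (s ∩ (B v₂ \ B v₁)) := by
      intro s hs
      rw [← measure_union (Disjoint.mono Set.inter_subset_right Set.inter_subset_right
          disjoint_sdiff_self_right) (hs.inter ((mB v₂).diff (mB v₁)))]
      congr 1
      rw [← Set.inter_union_distrib_left, Set.union_diff_cancel hBsub]
    have h2 := hdecomp (A u₂) (mA u₂)
    have h1 := hdecomp (A u₁) (mA u₁)
    have hle : ℙ (A u₁ ∩ (B v₂ \ B v₁)) ≤ ℙ (A u₂ ∩ (B v₂ \ B v₁)) :=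
      measure_mono (Set.inter_subset_inter_left _ hAsub)
    have hsum : ℙ (A u₂ ∩ B v₁) + ℙ (A u₁ ∩ B v₂) ≤ ℙ (A u₂ ∩ B v₂) + ℙ (A u₁ ∩ B v₁) := by
      rw [h1, h2]
      calc ℙ (A u₂ ∩ B v₁) + (ℙ (A u₁ ∩ B v₁) + ℙ (A u₁ ∩ (B v₂ \ B v₁)))
          ≤ ℙ (A u₂ ∩ B v₁) + (ℙ (A u₁ ∩ B v₁) + ℙ (A u₂ ∩ (B v₂ \ B v₁))) := by
            gcongr
        _ = ℙ (A u₂ ∩ B v₁) + ℙ (A u₂ ∩ (B v₂ \ B v₁)) + ℙ (A u₁ ∩ B v₁) := by ring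
    have hR := ENNReal.toReal_mono (by finiteness) hsum
    rw [ENNReal.toReal_add (measure_ne_top _ _) (measure_ne_top _ _),
        ENNReal.toReal_add (measure_ne_top _ _) (measure_ne_top _ _)] at hR
    simp only [hC]
    linarith
  · -- uniqueness
    intro C' hC' hfact' u hu v hv
    obtain ⟨hrange, hg1, hg2, hm1, hm2, _⟩ := hC'
    -- copula properties of C already established above; re-derive needed ones
    have hCg1 : ∀ u ∈ Set.Icc (0:ℝ) 1, C u 0 = 0 := by
      intro u _
      have h0 : ℙ (B 0) = 0 := by
        have := levelB 0 le_rfl zero_le_one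
        rwa [ENNReal.toReal_eq_zero_iff, or_iff_left (measure_ne_top _ _)] at this
      have : ℙ (A u ∩ B 0) = 0 := measure_mono_null Set.inter_subset_right h0
      simp [hC, this]
    have hCg2 : ∀ v ∈ Set.Icc (0:ℝ) 1, C 0 v = 0 := by
      intro v _
      have h0 : ℙ (A 0) = 0 := by
        have := levelA 0 le_rfl zero_le_one
        rwa [ENNReal.toReal_eq_zero_iff, or_iff_left (measure_ne_top _ _)] at this
      have : ℙ (A 0 ∩ B v) = 0 := measure_mono_null Set.inter_subset_left h0
      simp [hC, this]
    have hCm1 : ∀ u ∈ Set.Icc (0:ℝ) 1, C u 1 = u := by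
      intro u hu
      have hB1 : B 1 = Set.univ := Set.eq_univ_of_forall fun ω =>
        F_le_one ℙ Y hY G hG hGcont (Y ω)
      rw [hC]; simp only [hB1, Set.inter_univ]; exact levelA u hu.1 hu.2
    have hCm2 : ∀ v ∈ Set.Icc (0:ℝ) 1, C 1 v = v := by
      intro v hv
      have hA1 : A 1 = Set.univ := Set.eq_univ_of_forall fun ω =>
        F_le_one ℙ X hX F hF hFcont (X ω)
      rw [hC]; simp only [hA1, Set.univ_inter]; exact levelB v hv.1 hv.2
    rcases eq_or_lt_of_le hu.1 with hu0 | hu0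
    · rw [← hu0, hCg2 v hv, hg2 v hv]
    rcases eq_or_lt_of_le hu.2 with hu1 | hu1
    · rw [hu1, hCm2 v hv, hm2 v hv]
    rcases eq_or_lt_of_le hv.1 with hv0 | hv0
    · rw [← hv0, hCg1 u hu, hg1 u hu]
    rcases eq_or_lt_of_le hv.2 with hv1 | hv1
    · rw [hv1, hCm1 u hu, hm1 u hu]
    obtain ⟨x, hx⟩ := F_surj ℙ X hX F hF hFcont u hu0 hu1
    obtain ⟨y, hy⟩ := F_surj ℙ Y hY G hG hGcont v hv0 hv1
    rw [← hx, ← hy, ← hCfact x y, hfact' x y]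
end

section
/- Let C be a copula and let F, G : ℝ → [0,1] be distribution functions (nondecreasing, right-continuous, with limit 0 at −∞ and limit 1 at +∞). Then there exists a probability measure ν on ℝ² such that ν((−∞,x] × (−∞,y]) = C(F(x), G(y)) for all x, y ∈ ℝ, and the two one-dimensional marginal measures of ν have distribution functions F and G respectively. -/
open MeasureTheory

/-- A one-dimensional distribution function: nondecreasing, right-continuous, with
limit `0` at `-∞` and limit `1` at `+∞`, taking values in `[0,1]`. -/
def IsDistributionFunction (F : ℝ → ℝ) : Prop :=
  Monotone F ∧ (∀ x, ContinuousWithinAt F (Set.Ici x) x) ∧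
    Filter.Tendsto F Filter.atBot (nhds 0) ∧ Filter.Tendsto F Filter.atTop (nhds 1) ∧
    ∀ x, F x ∈ Set.Icc (0:ℝ) 1

open Filter Set ProbabilityTheory Topology
open scoped ENNReal

namespace SklarAux

variable {C : ℝ → ℝ → ℝ} {F G : ℝ → ℝ}

lemma mem01_zero : (0:ℝ) ∈ Icc (0:ℝ) 1 := ⟨le_rfl, zero_le_one⟩
lemma mem01_one : (1:ℝ) ∈ Icc (0:ℝ) 1 := ⟨zero_le_one, le_rfl⟩

section Copula
variable (hC : IsCopula C)
include hC

lemma copula_mono_left {u₁ u₂ v : ℝ} (h1 : u₁ ∈ Icc (0:ℝ) 1) (h2 : u₂ ∈ Icc (0:ℝ) 1)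
    (hv : v ∈ Icc (0:ℝ) 1) (h : u₁ ≤ u₂) : C u₁ v ≤ C u₂ v := by
  have h0 := hC.2.2.2.2.2 u₁ u₂ 0 v h1 h2 mem01_zero hv h hv.1
  have e1 := hC.2.1 u₁ h1
  have e2 := hC.2.1 u₂ h2
  linarith

lemma copula_mono_right {u v₁ v₂ : ℝ} (hu : u ∈ Icc (0:ℝ) 1) (h1 : v₁ ∈ Icc (0:ℝ) 1)
    (h2 : v₂ ∈ Icc (0:ℝ) 1) (h : v₁ ≤ v₂) : C u v₁ ≤ C u v₂ := by
  have h0 := hC.2.2.2.2.2 0 u v₁ v₂ mem01_zero hu h1 h2 hu.1 h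
  have e1 := hC.2.2.1 v₁ h1
  have e2 := hC.2.2.1 v₂ h2
  linarith

lemma copula_lip_left {u₁ u₂ v : ℝ} (h1 : u₁ ∈ Icc (0:ℝ) 1) (h2 : u₂ ∈ Icc (0:ℝ) 1)
    (hv : v ∈ Icc (0:ℝ) 1) (h : u₁ ≤ u₂) : C u₂ v - C u₁ v ≤ u₂ - u₁ := by
  have h0 := hC.2.2.2.2.2 u₁ u₂ v 1 h1 h2 hv mem01_one h hv.2
  have e1 := hC.2.2.2.1 u₁ h1
  have e2 := hC.2.2.2.1 u₂ h2
  linarith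

lemma copula_lip_right {u v₁ v₂ : ℝ} (hu : u ∈ Icc (0:ℝ) 1) (h1 : v₁ ∈ Icc (0:ℝ) 1)
    (h2 : v₂ ∈ Icc (0:ℝ) 1) (h : v₁ ≤ v₂) : C u v₂ - C u v₁ ≤ v₂ - v₁ := by
  have h0 := hC.2.2.2.2.2 u 1 v₁ v₂ hu mem01_one h1 h2 hu.2 h
  have e1 := hC.2.2.2.2.1 v₁ h1
  have e2 := hC.2.2.2.2.1 v₂ h2
  linarith

lemma tendsto_C_left {β : Type*} {l : Filter β} {g : β → ℝ} {u v : ℝ}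
    (hu : u ∈ Icc (0:ℝ) 1) (hv : v ∈ Icc (0:ℝ) 1)
    (hg : Tendsto g l (𝓝 u)) (hmem : ∀ᶠ b in l, g b ∈ Icc (0:ℝ) 1) :
    Tendsto (fun b => C (g b) v) l (𝓝 (C u v)) := by
  have h0 : Tendsto (fun b => C (g b) v - C u v) l (𝓝 0) := by
    apply squeeze_zero_norm' (a := fun b => |g b - u|)
    · filter_upwards [hmem] with b hb
      rw [Real.norm_eq_abs, abs_sub_le_iff]
      rcases le_total (g b) u with hle | hle
      · have h1 := copula_lip_left hC hb hu hv hle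
        have h2 := copula_mono_left hC hb hu hv hle
        have h3 : u - g b ≤ |g b - u| := by rw [abs_sub_comm]; exact le_abs_self _
        constructor <;> linarith [abs_nonneg (g b - u)]
      · have h1 := copula_lip_left hC hu hb hv hle
        have h2 := copula_mono_left hC hu hb hv hle
        have h3 : g b - u ≤ |g b - u| := le_abs_self _
        constructor <;> linarith [abs_nonneg (g b - u)]
    · have h4 : Tendsto (fun b => g b - u) l (𝓝 0) := by
        simpa using hg.sub_const u
      simpa using h4.abs
  have := h0.add_const (C u v)
  simpa using this

lemma tendsto_C_right {β : Type*} {l : Filter β} {g : β → ℝ} {u v : ℝ}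
    (hu : u ∈ Icc (0:ℝ) 1) (hv : v ∈ Icc (0:ℝ) 1)
    (hg : Tendsto g l (𝓝 v)) (hmem : ∀ᶠ b in l, g b ∈ Icc (0:ℝ) 1) :
    Tendsto (fun b => C u (g b)) l (𝓝 (C u v)) := by
  have h0 : Tendsto (fun b => C u (g b) - C u v) l (𝓝 0) := by
    apply squeeze_zero_norm' (a := fun b => |g b - v|)
    · filter_upwards [hmem] with b hb
      rw [Real.norm_eq_abs, abs_sub_le_iff]
      rcases le_total (g b) v with hle | hle
      · have h1 := copula_lip_right hC hu hb hv hle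
        have h2 := copula_mono_right hC hu hb hv hle
        have h3 : v - g b ≤ |g b - v| := by rw [abs_sub_comm]; exact le_abs_self _
        constructor <;> linarith [abs_nonneg (g b - v)]
      · have h1 := copula_lip_right hC hu hv hb hle
        have h2 := copula_mono_right hC hu hv hb hle
        have h3 : g b - v ≤ |g b - v| := le_abs_self _
        constructor <;> linarith [abs_nonneg (g b - v)]
    · have h4 : Tendsto (fun b => g b - v) l (𝓝 0) := by
        simpa using hg.sub_const v
      simpa using h4.abs
  have := h0.add_const (C u v)
  simpa using this

end Copula

/-- The Stieltjes function associated to a distribution function. -/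
noncomputable def dSF (F : ℝ → ℝ) (hF : IsDistributionFunction F) : StieltjesFunction ℝ :=
  ⟨F, hF.1, hF.2.1⟩

@[simp] lemma dSF_apply (hF : IsDistributionFunction F) (x : ℝ) : dSF F hF x = F x := rfl

lemma dSF_measure_Iic (hF : IsDistributionFunction F) (x : ℝ) :
    (dSF F hF).measure (Iic x) = ENNReal.ofReal (F x) := by
  have := (dSF F hF).measure_Iic (l := 0) hF.2.2.1 x
  simpa using this

lemma dSF_measure_univ (hF : IsDistributionFunction F) : (dSF F hF).measure univ = 1 := by
  have := (dSF F hF).measure_univ (l := 0) (u := 1) hF.2.2.1 hF.2.2.2.1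
  simpa using this

/-- The Stieltjes function `x ↦ C (F x) v`. -/
noncomputable def jSF (C : ℝ → ℝ → ℝ) (F : ℝ → ℝ) (hC : IsCopula C) (hF : IsDistributionFunction F)
    (v : ℝ) (hv : v ∈ Icc (0:ℝ) 1) : StieltjesFunction ℝ :=
  ⟨fun x => C (F x) v,
   fun a b hab => copula_mono_left hC (hF.2.2.2.2 a) (hF.2.2.2.2 b) hv (hF.1 hab),
   fun x => tendsto_C_left hC (hF.2.2.2.2 x) hv (hF.2.1 x)
     (Eventually.of_forall fun y => hF.2.2.2.2 y)⟩

@[simp] lemma jSF_apply (hC : IsCopula C) (hF : IsDistributionFunction F) {v : ℝ} (hv : v ∈ Icc (0:ℝ) 1) (x : ℝ) :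
    jSF C F hC hF v hv x = C (F x) v := rfl

lemma jSF_tendsto_atBot (hC : IsCopula C) (hF : IsDistributionFunction F) {v : ℝ} (hv : v ∈ Icc (0:ℝ) 1) :
    Tendsto (jSF C F hC hF v hv) atBot (𝓝 0) := by
  have := tendsto_C_left hC mem01_zero hv hF.2.2.1 (Eventually.of_forall fun y => hF.2.2.2.2 y)
  rw [hC.2.2.1 v hv] at this
  exact this

lemma jSF_tendsto_atTop (hC : IsCopula C) (hF : IsDistributionFunction F) {v : ℝ} (hv : v ∈ Icc (0:ℝ) 1) :
    Tendsto (jSF C F hC hF v hv) atTop (𝓝 v) := by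
  have := tendsto_C_left hC mem01_one hv hF.2.2.2.1 (Eventually.of_forall fun y => hF.2.2.2.2 y)
  rw [hC.2.2.2.2.1 v hv] at this
  exact this

lemma jSF_measure_Iic (hC : IsCopula C) (hF : IsDistributionFunction F) {v : ℝ} (hv : v ∈ Icc (0:ℝ) 1) (x : ℝ) :
    (jSF C F hC hF v hv).measure (Iic x) = ENNReal.ofReal (C (F x) v) := by
  have := (jSF C F hC hF v hv).measure_Iic (l := 0) (jSF_tendsto_atBot hC hF hv) x
  simpa using this

lemma jSF_measure_univ (hC : IsCopula C) (hF : IsDistributionFunction F) {v : ℝ} (hv : v ∈ Icc (0:ℝ) 1) :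
    (jSF C F hC hF v hv).measure univ = ENNReal.ofReal v := by
  have := (jSF C F hC hF v hv).measure_univ (l := 0) (u := v)
    (jSF_tendsto_atBot hC hF hv) (jSF_tendsto_atTop hC hF hv)
  simpa using this

lemma sf_measure_add (f g h : StieltjesFunction ℝ) (hadd : ∀ x, h x = f x + g x) :
    h.measure = f.measure + g.measure := by
  refine Measure.ext_of_Ioc' h.measure _
    (fun a b _ => by rw [StieltjesFunction.measure_Ioc]; exact ENNReal.ofReal_ne_top)
    (fun a b hab => ?_)
  rw [Measure.add_apply, StieltjesFunction.measure_Ioc, StieltjesFunction.measure_Ioc,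
    StieltjesFunction.measure_Ioc, hadd, hadd,
    ← ENNReal.ofReal_add (sub_nonneg.2 (f.mono hab.le)) (sub_nonneg.2 (g.mono hab.le))]
  congr 1
  ring

/-- Difference of Stieltjes functions, when it is monotone. -/
noncomputable def subSF (f g : StieltjesFunction ℝ)
    (h : ∀ a b, a ≤ b → f b - f a ≤ g b - g a) : StieltjesFunction ℝ :=
  ⟨fun x => g x - f x,
   fun a b hab => by have := h a b hab; simp only []; linarith,
   fun x => (g.right_continuous x).sub (f.right_continuous x)⟩

@[simp] lemma subSF_apply (f g : StieltjesFunction ℝ) (h : ∀ a b, a ≤ b → f b - f a ≤ g b - g a)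
    (x : ℝ) : subSF f g h x = g x - f x := rfl

lemma sf_measure_decomp (f g : StieltjesFunction ℝ)
    (h : ∀ a b, a ≤ b → f b - f a ≤ g b - g a) :
    g.measure = f.measure + (subSF f g h).measure :=
  sf_measure_add f (subSF f g h) g (fun x => by simp only [subSF_apply]; ring)

lemma sf_measure_mono (f g : StieltjesFunction ℝ)
    (h : ∀ a b, a ≤ b → f b - f a ≤ g b - g a) : f.measure ≤ g.measure := by
  rw [sf_measure_decomp f g h]
  exact Measure.le_add_right le_rfl

lemma ae_eq_helper {α : Type*} [MeasurableSpace α] {μ : Measure α} {f g : α → ℝ≥0∞}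
    (hf : AEMeasurable f μ) (hg : AEMeasurable g μ) (hfg : f ≤ᵐ[μ] g)
    (hfin : ∫⁻ a, f a ∂μ ≠ ∞) (hle : ∫⁻ a, g a ∂μ ≤ ∫⁻ a, f a ∂μ) :
    f =ᵐ[μ] g := by
  have hsub : ∫⁻ a, g a - f a ∂μ = ∫⁻ a, g a ∂μ - ∫⁻ a, f a ∂μ :=
    lintegral_sub' hf hfin hfg
  have h0 : ∫⁻ a, g a - f a ∂μ = 0 := by
    rw [hsub]; exact tsub_eq_zero_iff_le.2 hle
  have h1 := (lintegral_eq_zero_iff' (hg.sub hf)).1 h0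
  filter_upwards [h1, hfg] with a ha hb
  have : g a ≤ f a := tsub_eq_zero_iff_le.1 ha
  exact le_antisymm hb this

lemma exists_rat_seq (y : ℝ) : ∃ u : ℕ → ℚ, (∀ n, y < (u n : ℝ)) ∧
    Tendsto (fun n => ((u n : ℚ) : ℝ)) atTop (𝓝 y) := by
  have h : ∀ n : ℕ, ∃ q : ℚ, y < (q : ℝ) ∧ (q : ℝ) < y + 1 / (n + 1) := by
    intro n
    have : (0:ℝ) < 1 / (n + 1) := by positivity
    exact exists_rat_btwn (by linarith)
  choose u hu1 hu2 using h
  refine ⟨u, hu1, ?_⟩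
  have hupper : Tendsto (fun n : ℕ => y + 1 / ((n:ℝ) + 1)) atTop (𝓝 y) := by
    have := tendsto_one_div_add_atTop_nhds_zero_nat (𝕜 := ℝ)
    have h2 := (tendsto_const_nhds (x := y) (f := atTop (α := ℕ))).add this
    simpa using h2
  exact tendsto_of_tendsto_of_tendsto_of_le_of_le tendsto_const_nhds hupper
    (fun n => (hu1 n).le) (fun n => (hu2 n).le)

lemma tendsto_iInf_rat_gt {g : ℚ → ℝ} (hmono : Monotone g) (hbdd : ∀ q, 0 ≤ g q) {y : ℝ}
    {u : ℕ → ℚ} (hu1 : ∀ n, y < (u n : ℝ)) (hu2 : Tendsto (fun n => ((u n : ℚ) : ℝ)) atTop (𝓝 y)) :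
    Tendsto (fun n => g (u n)) atTop (𝓝 (⨅ r : { r' : ℚ // y < (r' : ℝ) }, g r)) := by
  have hne : Nonempty { r' : ℚ // y < (r' : ℝ) } := ⟨⟨u 0, hu1 0⟩⟩
  have hbb : BddBelow (range fun r : { r' : ℚ // y < (r' : ℝ) } => g r) :=
    ⟨0, by rintro _ ⟨r, rfl⟩; exact hbdd r⟩
  rw [Metric.tendsto_atTop]
  intro ε hε
  set I := ⨅ r : { r' : ℚ // y < (r' : ℝ) }, g r with hI
  obtain ⟨r, hr⟩ : ∃ r : { r' : ℚ // y < (r' : ℝ) }, g r < I + ε :=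
    exists_lt_of_ciInf_lt (by linarith)
  have hev : ∀ᶠ n in atTop, (u n : ℝ) < ((r : ℚ) : ℝ) := hu2.eventually_lt_const r.2
  obtain ⟨N, hN⟩ := eventually_atTop.1 hev
  refine ⟨N, fun n hn => ?_⟩
  have h1 : g (u n) ≤ g r := hmono (by exact_mod_cast (hN n hn).le)
  have h2 : I ≤ g (u n) := ciInf_le hbb ⟨u n, hu1 n⟩
  rw [Real.dist_eq, abs_lt]
  constructor <;> linarith

end SklarAux

open SklarAux

/-- **Converse part of Sklar's theorem.** If `C` is a copula and `F`, `G` are distribution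
functions, then `H(x,y) = C(F x, G y)` is the joint distribution function of a probability
measure `ν` on `ℝ²` whose one-dimensional marginals have distribution functions `F` and `G`. -/
theorem sklar_converse (C : ℝ → ℝ → ℝ) (hC : IsCopula C) (F G : ℝ → ℝ)
    (hF : IsDistributionFunction F) (hG : IsDistributionFunction G) :
    ∃ ν : Measure (ℝ × ℝ), IsProbabilityMeasure ν ∧
      (∀ x y : ℝ, (ν (Set.Iic x ×ˢ Set.Iic y)).toReal = C (F x) (G y)) ∧
      (∀ x : ℝ, ((ν.map Prod.fst) (Set.Iic x)).toReal = F x) ∧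
      (∀ y : ℝ, ((ν.map Prod.snd) (Set.Iic y)).toReal = G y) := by
  classical
  have hFmem : ∀ x, F x ∈ Icc (0:ℝ) 1 := hF.2.2.2.2
  have hGmem : ∀ x, G x ∈ Icc (0:ℝ) 1 := hG.2.2.2.2
  set μF : Measure ℝ := (dSF F hF).measure with hμFdef
  have hμF_Iic : ∀ x, μF (Iic x) = ENNReal.ofReal (F x) := fun x => dSF_measure_Iic hF x
  have hμF_univ : μF univ = 1 := dSF_measure_univ hF
  haveI : IsProbabilityMeasure μF := ⟨hμF_univ⟩
  set ρ : ℚ → Measure ℝ := fun q => (jSF C F hC hF (G q) (hGmem q)).measure with hρdef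
  have hρ_Iic : ∀ q x, ρ q (Iic x) = ENNReal.ofReal (C (F x) (G q)) :=
    fun q x => jSF_measure_Iic hC hF (hGmem q) x
  have hρ_univ : ∀ q, ρ q univ = ENNReal.ofReal (G q) :=
    fun q => jSF_measure_univ hC hF (hGmem q)
  have hρ_fin : ∀ q, IsFiniteMeasure (ρ q) := fun q =>
    ⟨by rw [hρ_univ q]; exact ENNReal.ofReal_lt_top⟩
  have hρ_le : ∀ q, ρ q ≤ μF := by
    intro q
    exact sf_measure_mono _ _ (fun a b hab =>
      copula_lip_left hC (hFmem a) (hFmem b) (hGmem q) (hF.1 hab))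
  have hρ_ac : ∀ q, ρ q ≪ μF := fun q => Measure.absolutelyContinuous_of_le (hρ_le q)
  set rn : ℚ → ℝ → ℝ≥0∞ := fun q => (ρ q).rnDeriv μF with hrndef
  have hrn_meas : ∀ q, Measurable (rn q) := fun q => Measure.measurable_rnDeriv _ _
  have hrn_int : ∀ q (s : Set ℝ), MeasurableSet s → ∫⁻ a in s, rn q a ∂μF = ρ q s := by
    intro q s hs
    haveI := hρ_fin q
    exact Measure.setLIntegral_rnDeriv' (hρ_ac q) hs
  have hrn_le_one : ∀ q, rn q ≤ᵐ[μF] 1 := fun q => Measure.rnDeriv_le_one_of_le (hρ_le q)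
  have hrn_mono : ∀ q r : ℚ, q ≤ r → rn q ≤ᵐ[μF] rn r := by
    intro q r hqr
    haveI := hρ_fin q; haveI := hρ_fin r
    have hsub : ∀ a b : ℝ, a ≤ b →
        (jSF C F hC hF (G q) (hGmem q)) b - (jSF C F hC hF (G q) (hGmem q)) a ≤
        (jSF C F hC hF (G r) (hGmem r)) b - (jSF C F hC hF (G r) (hGmem r)) a := by
      intro a b hab
      have h0 := hC.2.2.2.2.2 (F a) (F b) (G q) (G r) (hFmem a) (hFmem b) (hGmem q) (hGmem r)
        (hF.1 hab) (hG.1 (by exact_mod_cast hqr))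
      simp only [jSF_apply]
      linarith
    set d := subSF (jSF C F hC hF (G q) (hGmem q)) (jSF C F hC hF (G r) (hGmem r)) hsub with hd
    have hdec : ρ r = ρ q + d.measure := sf_measure_decomp _ _ hsub
    haveI : IsFiniteMeasure d.measure := by
      refine ⟨?_⟩
      have h1 : ρ r univ = ρ q univ + d.measure univ := by rw [hdec]; rfl
      have h2 : d.measure univ ≤ ρ r univ := h1 ▸ le_add_self
      exact lt_of_le_of_lt h2 (by rw [hρ_univ r]; exact ENNReal.ofReal_lt_top)
    have hadd := Measure.rnDeriv_add (ρ q) d.measure μF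
    rw [← hdec] at hadd
    filter_upwards [hadd] with a ha
    rw [hrndef]
    simp only []
    rw [ha]
    exact le_self_add
  have hmono_ae : ∀ᵐ a ∂μF, ∀ q r : ℚ, q ≤ r → rn q a ≤ rn r a := by
    rw [ae_all_iff]; intro q; rw [ae_all_iff]; intro r
    by_cases h : q ≤ r
    · filter_upwards [hrn_mono q r h] with a ha _; exact ha
    · exact Eventually.of_forall fun a h' => absurd h' h
  have hle1_ae : ∀ᵐ a ∂μF, ∀ q : ℚ, rn q a ≤ 1 := ae_all_iff.2 fun q => hrn_le_one q
  -- sup over ℕ is 1 a.e.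
  have hsup_ae : ∀ᵐ a ∂μF, (⨆ n : ℕ, rn (n : ℚ) a) = 1 := by
    set L : ℝ → ℝ≥0∞ := fun a => ⨆ n : ℕ, rn (n : ℚ) a with hL
    have hLmeas : Measurable L := Measurable.iSup fun n => hrn_meas _
    have hL_le : L ≤ᵐ[μF] (fun _ => (1:ℝ≥0∞)) := by
      filter_upwards [hle1_ae] with a ha
      exact iSup_le fun n => ha _
    have hGn : Tendsto (fun n : ℕ => ENNReal.ofReal (G ((n : ℚ) : ℝ))) atTop (𝓝 1) := by
      have h1 : Tendsto (fun n : ℕ => ((n : ℚ) : ℝ)) atTop atTop := by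
        have := tendsto_natCast_atTop_atTop (R := ℝ)
        convert this using 1
        funext n; exact Rat.cast_natCast n
      have h2 : Tendsto (fun n : ℕ => G ((n : ℚ) : ℝ)) atTop (𝓝 1) := hG.2.2.2.1.comp h1
      have h3 := (ENNReal.continuous_ofReal.tendsto 1).comp h2
      rwa [ENNReal.ofReal_one] at h3
    have hint : ∫⁻ a, L a ∂μF = 1 := by
      have hswap := lintegral_iSup' (μ := μF) (f := fun n a => rn (n : ℚ) a)
        (fun n => (hrn_meas _).aemeasurable) ?_
      · rw [hL]
        rw [hswap]
        have h1 : ∀ n : ℕ, ∫⁻ a, rn (n : ℚ) a ∂μF = ENNReal.ofReal (G ((n : ℚ) : ℝ)) := by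
          intro n
          rw [← setLIntegral_univ, hrn_int _ _ MeasurableSet.univ, hρ_univ]
        simp_rw [h1]
        have hmono' : Monotone fun n : ℕ => ENNReal.ofReal (G ((n : ℚ) : ℝ)) := by
          intro n m hnm
          exact ENNReal.ofReal_le_ofReal (hG.1 (by exact_mod_cast hnm))
        exact tendsto_nhds_unique (tendsto_atTop_iSup hmono') hGn
      · filter_upwards [hmono_ae] with a ha
        intro n m hnm
        exact ha _ _ (by exact_mod_cast hnm)
    have heq : L =ᵐ[μF] (fun _ => (1:ℝ≥0∞)) := by
      refine ae_eq_helper hLmeas.aemeasurable aemeasurable_const hL_le ?_ ?_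
      · rw [hint]; exact ENNReal.one_ne_top
      · rw [hint, lintegral_const, hμF_univ]; simp
    filter_upwards [heq] with a ha
    exact ha
  -- inf at -n is 0 a.e.
  have hinf_ae : ∀ᵐ a ∂μF, (⨅ n : ℕ, rn (-(n : ℚ)) a) = 0 := by
    set K : ℝ → ℝ≥0∞ := fun a => ⨅ n : ℕ, rn (-(n : ℚ)) a with hK
    have hKmeas : Measurable K := Measurable.iInf fun n => hrn_meas _
    have hint0 : ∫⁻ a, K a ∂μF = 0 := by
      refine le_antisymm ?_ (by positivity)
      have hle : ∀ n : ℕ, ∫⁻ a, K a ∂μF ≤ ENNReal.ofReal (G ((-(n:ℚ) : ℚ) : ℝ)) := by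
        intro n
        calc ∫⁻ a, K a ∂μF ≤ ∫⁻ a, rn (-(n:ℚ)) a ∂μF :=
              lintegral_mono fun a => iInf_le _ n
          _ = ρ (-(n:ℚ)) univ := by
              rw [← setLIntegral_univ, hrn_int _ _ MeasurableSet.univ]
          _ = ENNReal.ofReal (G ((-(n:ℚ) : ℚ) : ℝ)) := hρ_univ _
      have htb : Tendsto (fun n : ℕ => ENNReal.ofReal (G ((-(n:ℚ) : ℚ) : ℝ))) atTop (𝓝 0) := by
        have h1 : Tendsto (fun n : ℕ => ((-(n:ℚ) : ℚ) : ℝ)) atTop atBot := by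
          have h2 : Tendsto (fun n : ℕ => (n : ℝ)) atTop atTop := tendsto_natCast_atTop_atTop
          have h3 := tendsto_neg_atBot_iff.2 h2
          convert h3 using 1
          ext n; push_cast; ring
        have h2 : Tendsto (fun n : ℕ => G ((-(n:ℚ) : ℚ) : ℝ)) atTop (𝓝 0) := hG.2.2.1.comp h1
        have h3 := (ENNReal.continuous_ofReal.tendsto 0).comp h2
        rwa [ENNReal.ofReal_zero] at h3
      exact ge_of_tendsto htb (Eventually.of_forall hle)
    have := (lintegral_eq_zero_iff' hKmeas.aemeasurable).1 hint0
    filter_upwards [this] with a ha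
    exact ha
  -- right continuity at each rational a.e.
  have hiInf_ae : ∀ t : ℚ, ∀ᵐ a ∂μF, (⨅ r : Ioi t, rn (r : ℚ) a) = rn t a := by
    intro t
    set N : ℝ → ℝ≥0∞ := fun a => ⨅ r : Ioi t, rn (r : ℚ) a with hN
    have hNmeas : Measurable N := Measurable.iInf fun r => hrn_meas _
    have hge : rn t ≤ᵐ[μF] N := by
      filter_upwards [hmono_ae] with a ha
      exact le_iInf fun r => ha t r (le_of_lt r.2)
    have hintN : ∫⁻ a, N a ∂μF ≤ ENNReal.ofReal (G t) := by
      have h1 : ∀ n : ℕ, ∫⁻ a, N a ∂μF ≤ ENNReal.ofReal (G ((t + 1/(n+1) : ℚ) : ℝ)) := by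
        intro n
        have hmem : t < t + 1/(n+1) := by
          have : (0:ℚ) < 1/(n+1) := by positivity
          linarith
        calc ∫⁻ a, N a ∂μF ≤ ∫⁻ a, rn (t + 1/(n+1)) a ∂μF :=
              lintegral_mono fun a => iInf_le _ (⟨_, hmem⟩ : Ioi t)
          _ = ρ (t + 1/(n+1)) univ := by
              rw [← setLIntegral_univ, hrn_int _ _ MeasurableSet.univ]
          _ = ENNReal.ofReal (G ((t + 1/(n+1) : ℚ) : ℝ)) := hρ_univ _
      have h2 : Tendsto (fun n : ℕ => ((t + 1/(n+1) : ℚ) : ℝ)) atTop (𝓝[Ici (t:ℝ)] (t:ℝ)) := by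
        rw [tendsto_nhdsWithin_iff]
        constructor
        · have hup : Tendsto (fun n : ℕ => (t:ℝ) + 1/((n:ℝ)+1)) atTop (𝓝 (t:ℝ)) := by
            have := tendsto_one_div_add_atTop_nhds_zero_nat (𝕜 := ℝ)
            have h4 := (tendsto_const_nhds (x := (t:ℝ)) (f := atTop (α := ℕ))).add this
            simpa using h4
          convert hup using 1
          ext n; push_cast; ring
        · refine Eventually.of_forall fun n => ?_
          have : (0:ℚ) < 1/(n+1) := by positivity
          have h5 : (t:ℝ) ≤ ((t + 1/(n+1) : ℚ) : ℝ) := by exact_mod_cast (by linarith : t ≤ t + 1/(n+1))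
          exact h5
      have h3 : Tendsto (fun n : ℕ => G ((t + 1/(n+1) : ℚ) : ℝ)) atTop (𝓝 (G t)) :=
        (hG.2.1 (t:ℝ)).tendsto.comp h2
      have h4 := (ENNReal.continuous_ofReal.tendsto _).comp h3
      exact ge_of_tendsto h4 (Eventually.of_forall h1)
    have hfin : ∫⁻ a, rn t a ∂μF ≠ ∞ := by
      rw [← setLIntegral_univ, hrn_int _ _ MeasurableSet.univ, hρ_univ]
      exact ENNReal.ofReal_ne_top
    have hle' : ∫⁻ a, N a ∂μF ≤ ∫⁻ a, rn t a ∂μF := by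
      rw [← setLIntegral_univ (μ := μF) (f := rn t), hrn_int _ _ MeasurableSet.univ, hρ_univ]
      exact hintN
    have heq : rn t =ᵐ[μF] N :=
      ae_eq_helper (hrn_meas t).aemeasurable hNmeas.aemeasurable hge hfin hle'
    filter_upwards [heq] with a ha
    exact ha.symm
  -- the rational CDF candidate
  set f₀ : ℝ → ℚ → ℝ := fun a q => (rn q a).toReal with hf₀def
  have hf₀meas : Measurable f₀ := measurable_pi_lambda _ fun q => (hrn_meas q).ennreal_toReal
  have hae_pt : ∀ᵐ a ∂μF, IsRatStieltjesPoint f₀ a := by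
    filter_upwards [hmono_ae, hle1_ae, hsup_ae, hinf_ae, ae_all_iff.2 hiInf_ae] with a hmono hle1
      hsup hinf hiInf
    have hne_top : ∀ q, rn q a ≠ ∞ := fun q => (lt_of_le_of_lt (hle1 q) ENNReal.one_lt_top).ne
    have hmono' : Monotone (f₀ a) := fun q r hqr => ENNReal.toReal_mono (hne_top r) (hmono q r hqr)
    have hb : ∀ q, f₀ a q ≤ 1 := by
      intro q
      have := ENNReal.toReal_mono (by simp) (hle1 q)
      simpa using this
    have hbdd : BddAbove (range (f₀ a)) := ⟨1, by rintro _ ⟨q, rfl⟩; exact hb q⟩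
    have hbddb : BddBelow (range (f₀ a)) := ⟨0, by rintro _ ⟨q, rfl⟩; exact ENNReal.toReal_nonneg⟩
    refine ⟨hmono', ?_, ?_, ?_⟩
    · -- atTop
      have hsupN : (⨆ n : ℕ, f₀ a ((n:ℚ))) = 1 := by
        rw [hf₀def]
        simp only []
        rw [← ENNReal.toReal_iSup (fun n => hne_top _)]
        rw [hsup]
        simp
      have hsup' : ⨆ q : ℚ, f₀ a q = 1 := by
        refine le_antisymm (ciSup_le hb) ?_
        calc (1:ℝ) = ⨆ n : ℕ, f₀ a ((n:ℚ)) := hsupN.symm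
          _ ≤ ⨆ q : ℚ, f₀ a q := ciSup_le fun n => le_ciSup hbdd _
      rw [← hsup']
      exact tendsto_atTop_ciSup hmono' hbdd
    · -- atBot
      have hinfN : (⨅ n : ℕ, f₀ a (-(n:ℚ))) = 0 := by
        rw [hf₀def]
        simp only []
        rw [← ENNReal.toReal_iInf (fun n => hne_top _)]
        rw [hinf]
        simp
      have hinf' : ⨅ q : ℚ, f₀ a q = 0 := by
        refine le_antisymm ?_ (le_ciInf fun q => ENNReal.toReal_nonneg)
        calc ⨅ q : ℚ, f₀ a q ≤ ⨅ n : ℕ, f₀ a (-(n:ℚ)) := le_ciInf fun n => ciInf_le hbddb _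
          _ = 0 := hinfN
      rw [← hinf']
      exact tendsto_atBot_ciInf hmono' hbddb
    · -- iInf rat gt
      intro t
      have h1 : (⨅ r : Ioi t, f₀ a (r : ℚ)) = ((⨅ r : Ioi t, rn (r : ℚ) a)).toReal := by
        rw [ENNReal.toReal_iInf (fun r => hne_top _)]
      rw [h1, hiInf t]
  -- build the kernel
  have hrcdf : IsMeasurableRatCDF (toRatCDF f₀) := isMeasurableRatCDF_toRatCDF hf₀meas
  have hf₁_ae : ∀ᵐ a ∂μF, ∀ q, toRatCDF f₀ a q = f₀ a q := by
    filter_upwards [hae_pt] with a ha q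
    exact toRatCDF_of_isRatStieltjesPoint ha q
  set κ : Kernel ℝ ℝ :=
    ⟨fun a => (hrcdf.stieltjesFunction a).measure,
     hrcdf.measurable_measure_stieltjesFunction⟩ with hκdef
  have hκ_apply : ∀ a, κ a = (hrcdf.stieltjesFunction a).measure := fun a => rfl
  haveI : IsMarkovKernel κ := ⟨fun a => by
    rw [hκ_apply]
    exact hrcdf.instIsProbabilityMeasure_stieltjesFunction a⟩
  -- the key computation
  have key : ∀ (y : ℝ) (u : ℕ → ℚ), (∀ n, y < ((u n : ℚ) : ℝ)) →
      Tendsto (fun n => ((u n : ℚ) : ℝ)) atTop (𝓝 y) →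
      ∀ (s : Set ℝ), MeasurableSet s →
      Tendsto (fun n => ρ (u n) s) atTop (𝓝 (∫⁻ a in s, κ a (Iic y) ∂μF)) := by
    intro y u hu1 hu2 s hs
    have hκIic : ∀ a, κ a (Iic y) = ENNReal.ofReal (hrcdf.stieltjesFunction a y) := by
      intro a
      rw [hκ_apply]
      exact hrcdf.measure_stieltjesFunction_Iic a y
    have hptw : ∀ a, Tendsto (fun n => ENNReal.ofReal (toRatCDF f₀ a (u n))) atTop
        (𝓝 (ENNReal.ofReal (hrcdf.stieltjesFunction a y))) := by
      intro a
      have hsf : hrcdf.stieltjesFunction a y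
          = ⨅ r : { r' : ℚ // y < (r' : ℝ) }, toRatCDF f₀ a r := by
        have : hrcdf.stieltjesFunction a y
            = IsMeasurableRatCDF.stieltjesFunctionAux (toRatCDF f₀) a y := rfl
        rw [this, IsMeasurableRatCDF.stieltjesFunctionAux_def]
      have h1 : Tendsto (fun n => toRatCDF f₀ a (u n)) atTop
          (𝓝 (hrcdf.stieltjesFunction a y)) := by
        rw [hsf]
        exact tendsto_iInf_rat_gt (hrcdf.isRatStieltjesPoint a).mono
          (fun q => hrcdf.nonneg a q) hu1 hu2
      exact (ENNReal.continuous_ofReal.tendsto _).comp h1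
    have hdc : Tendsto (fun n => ∫⁻ a in s, ENNReal.ofReal (toRatCDF f₀ a (u n)) ∂μF) atTop
        (𝓝 (∫⁻ a in s, ENNReal.ofReal (hrcdf.stieltjesFunction a y) ∂μF)) := by
      refine tendsto_lintegral_of_dominated_convergence (bound := fun _ => 1)
        (fun n => (hrcdf.measurable.eval).ennreal_ofReal) ?_ ?_ ?_
      · intro n
        refine Eventually.of_forall fun a => ?_
        exact ENNReal.ofReal_le_one.2 (hrcdf.le_one a _)
      · simp only [lintegral_one, Measure.restrict_apply_univ]
        exact (measure_lt_top _ _).ne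
      · exact Eventually.of_forall hptw
    have heq : ∀ n, ∫⁻ a in s, ENNReal.ofReal (toRatCDF f₀ a (u n)) ∂μF = ρ (u n) s := by
      intro n
      have hcongr : (fun a => ENNReal.ofReal (toRatCDF f₀ a (u n))) =ᵐ[μF] rn (u n) := by
        filter_upwards [hf₁_ae, hle1_ae] with a ha hle
        rw [ha (u n), hf₀def]
        simp only []
        exact ENNReal.ofReal_toReal (lt_of_le_of_lt (hle (u n)) ENNReal.one_lt_top).ne
      rw [lintegral_congr_ae (ae_restrict_of_ae hcongr), hrn_int (u n) s hs]
    have hconv := hdc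
    rw [show (fun n => ∫⁻ a in s, ENNReal.ofReal (toRatCDF f₀ a (u n)) ∂μF)
        = fun n => ρ (u n) s from funext heq] at hconv
    simp_rw [hκIic]
    exact hconv
  -- assemble
  set ν : Measure (ℝ × ℝ) := μF ⊗ₘ κ with hνdef
  haveI : IsProbabilityMeasure ν := ⟨by
    rw [hνdef, Measure.compProd_apply_univ, hμF_univ]⟩
  refine ⟨ν, inferInstance, ?_, ?_, ?_⟩
  · intro x y
    obtain ⟨u, hu1, hu2⟩ := exists_rat_seq y
    have hk := key y u hu1 hu2 (Iic x) measurableSet_Iic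
    have hGy : Tendsto (fun n => G ((u n : ℚ) : ℝ)) atTop (𝓝 (G y)) := by
      refine (hG.2.1 y).tendsto.comp ?_
      rw [tendsto_nhdsWithin_iff]
      exact ⟨hu2, Eventually.of_forall fun n => (hu1 n).le⟩
    have hC1 : Tendsto (fun n => C (F x) (G ((u n : ℚ) : ℝ))) atTop (𝓝 (C (F x) (G y))) :=
      tendsto_C_right hC (hFmem x) (hGmem y) hGy (Eventually.of_forall fun n => hGmem _)
    have h2 : Tendsto (fun n => ρ (u n) (Iic x)) atTop
        (𝓝 (ENNReal.ofReal (C (F x) (G y)))) := by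
      simp_rw [hρ_Iic]
      exact (ENNReal.continuous_ofReal.tendsto _).comp hC1
    have h3 : ∫⁻ a in Iic x, κ a (Iic y) ∂μF = ENNReal.ofReal (C (F x) (G y)) :=
      tendsto_nhds_unique hk h2
    rw [hνdef, Measure.compProd_apply_prod measurableSet_Iic measurableSet_Iic, h3,
      ENNReal.toReal_ofReal]
    exact (hC.1 _ (hFmem x) _ (hGmem y)).1
  · intro x
    have hfst : ν.map Prod.fst = μF := by
      rw [hνdef]
      exact Measure.fst_compProd μF κ
    rw [hfst, hμF_Iic, ENNReal.toReal_ofReal (hFmem x).1]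
  · intro y
    obtain ⟨u, hu1, hu2⟩ := exists_rat_seq y
    have hk := key y u hu1 hu2 univ MeasurableSet.univ
    have hGy : Tendsto (fun n => G ((u n : ℚ) : ℝ)) atTop (𝓝 (G y)) := by
      refine (hG.2.1 y).tendsto.comp ?_
      rw [tendsto_nhdsWithin_iff]
      exact ⟨hu2, Eventually.of_forall fun n => (hu1 n).le⟩
    have h2 : Tendsto (fun n => ρ (u n) univ) atTop (𝓝 (ENNReal.ofReal (G y))) := by
      simp_rw [hρ_univ]
      exact (ENNReal.continuous_ofReal.tendsto _).comp hGy
    have h3 : ∫⁻ a in univ, κ a (Iic y) ∂μF = ENNReal.ofReal (G y) :=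
      tendsto_nhds_unique hk h2
    rw [Measure.map_apply measurable_snd measurableSet_Iic]
    have hpre : Prod.snd ⁻¹' (Iic y) = (univ : Set ℝ) ×ˢ Iic y := by
      ext p; simp
    rw [hpre, hνdef, Measure.compProd_apply_prod MeasurableSet.univ measurableSet_Iic, h3,
      ENNReal.toReal_ofReal (hGmem y).1]
end

section
/- Let X and Y be real-valued random variables with continuous marginal distribution functions F(x) = P(X ≤ x), G(y) = P(Y ≤ y) and joint distribution function H(x,y) = P(X ≤ x and Y ≤ y). Define the generalized inverses F⁻¹(u) = inf{x : F(x) ≥ u} and G⁻¹(v) = inf{y : G(y) ≥ v} for u, v ∈ (0,1], and set C(u,v) = H(F⁻¹(u), G⁻¹(v)). Then for all x, y ∈ ℝ with F(x) > 0 and G(y) > 0, one has C(F(x), G(y)) = H(x,y). -/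
open MeasureTheory

/-- Auxiliary: for a one-dimensional CDF-like function `K` of a random variable `Z`
with `0 < K t`, the generalized inverse point `sInf {z | K t ≤ K z}` lies below `t`
and the events `{Z ≤ ·}` at both points have the same probability. -/
lemma copula_aux {Ω : Type*} [MeasurableSpace Ω] (ℙ : Measure Ω) [IsProbabilityMeasure ℙ]
    (Z : Ω → ℝ) (hZ : Measurable Z) (K : ℝ → ℝ)
    (hK : ∀ t, K t = (ℙ {ω | Z ω ≤ t}).toReal) (hKc : Continuous K)
    (t : ℝ) (ht : 0 < K t) :
    sInf {z | K t ≤ K z} ≤ t ∧ ℙ {ω | Z ω ≤ sInf {z | K t ≤ K z}} = ℙ {ω | Z ω ≤ t} := by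
  have hne : ∀ s, ℙ {ω | Z ω ≤ s} ≠ ⊤ := fun s => measure_ne_top _ _
  have hKmono : Monotone K := by
    intro a b hab
    rw [hK, hK]
    exact ENNReal.toReal_mono (hne b) (measure_mono (fun ω h => le_trans h hab))
  set S : Set ℝ := {z | K t ≤ K z} with hS
  have hSne : S.Nonempty := ⟨t, show K t ≤ K t from le_rfl⟩
  -- boundedness below via continuity of measure along `{Z ≤ -n}`
  have htend : Filter.Tendsto (fun n : ℕ => ℙ {ω | Z ω ≤ -(n : ℝ)}) Filter.atTop
      (nhds (ℙ (⋂ n : ℕ, {ω | Z ω ≤ -(n : ℝ)}))) := by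
    apply tendsto_measure_iInter_atTop (fun n => (hZ measurableSet_Iic).nullMeasurableSet)
    · intro a b hab ω hω
      simp only [Set.mem_preimage, Set.mem_Iic] at *
      exact le_trans hω (neg_le_neg (Nat.cast_le.mpr hab))
    · exact ⟨0, measure_ne_top _ _⟩
  have hempty : (⋂ n : ℕ, {ω | Z ω ≤ -(n : ℝ)}) = (∅ : Set Ω) := by
    ext ω
    simp only [Set.mem_iInter, Set.mem_setOf_eq, Set.mem_empty_iff_false, iff_false, not_forall]
    obtain ⟨n, hn⟩ := exists_nat_gt (-Z ω)
    exact ⟨n, by linarith⟩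
  rw [hempty, measure_empty] at htend
  have hpos : (0 : ENNReal) < ℙ {ω | Z ω ≤ t} := by
    by_contra h
    push_neg at h
    have : ℙ {ω | Z ω ≤ t} = 0 := le_antisymm h bot_le
    rw [hK, this] at ht
    simp at ht
  obtain ⟨n, hn⟩ := ((htend.eventually_lt_const hpos).exists)
  have hBdd : BddBelow S := by
    refine ⟨-(n : ℝ), fun z hz => ?_⟩
    by_contra hc
    push_neg at hc
    have h1 : K z ≤ K (-(n : ℝ)) := hKmono hc.le
    have h2 : K (-(n : ℝ)) < K t := by
      rw [hK, hK]
      exact ENNReal.toReal_strict_mono (hne t) hn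
    exact absurd (le_trans hz h1) (not_le.mpr h2)
  have hSclosed : IsClosed S := isClosed_le continuous_const hKc
  have hmem : sInf S ∈ S := hSclosed.csInf_mem hSne hBdd
  have hle : sInf S ≤ t := csInf_le hBdd (le_refl _ : K t ≤ K t)
  have hKeq : K (sInf S) = K t := le_antisymm (hKmono hle) hmem
  refine ⟨hle, ?_⟩
  have := hKeq
  rw [hK, hK] at this
  exact (ENNReal.toReal_eq_toReal_iff' (hne _) (hne _)).mp this

/-- For continuous marginals, the copula constructed from the joint distribution via the
generalized inverses `F⁻¹(u) = inf {x : F x ≥ u}` and `G⁻¹(v) = inf {y : G y ≥ v}`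
satisfies `C (F x) (G y) = H x y` wherever `F x > 0` and `G y > 0`. -/
theorem copula_from_generalized_inverse
    {Ω : Type*} [MeasurableSpace Ω] (ℙ : Measure Ω) [IsProbabilityMeasure ℙ]
    (X Y : Ω → ℝ) (hX : Measurable X) (hY : Measurable Y)
    (F G : ℝ → ℝ) (H : ℝ → ℝ → ℝ)
    (hF : ∀ x, F x = (ℙ {ω | X ω ≤ x}).toReal)
    (hG : ∀ y, G y = (ℙ {ω | Y ω ≤ y}).toReal)
    (hH : ∀ x y, H x y = (ℙ {ω | X ω ≤ x ∧ Y ω ≤ y}).toReal)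
    (hFcont : Continuous F) (hGcont : Continuous G)
    (Finv Ginv : ℝ → ℝ) (C : ℝ → ℝ → ℝ)
    (hFinv : ∀ u, Finv u = sInf {x : ℝ | u ≤ F x})
    (hGinv : ∀ v, Ginv v = sInf {y : ℝ | v ≤ G y})
    (hCdef : ∀ u v, C u v = H (Finv u) (Ginv v)) :
    ∀ x y : ℝ, 0 < F x → 0 < G y → C (F x) (G y) = H x y := by
  intro x y hFx hGy
  obtain ⟨hxle, hxeq⟩ := copula_aux ℙ X hX F hF hFcont x hFx
  obtain ⟨hyle, hyeq⟩ := copula_aux ℙ Y hY G hG hGcont y hGy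
  set x' : ℝ := sInf {z | F x ≤ F z} with hx'
  set y' : ℝ := sInf {z | G y ≤ G z} with hy'
  have hFinvx : Finv (F x) = x' := hFinv (F x)
  have hGinvy : Ginv (G y) = y' := hGinv (G y)
  rw [hCdef, hFinvx, hGinvy, hH, hH]
  congr 1
  -- show equality of the joint probabilities
  set A : Set Ω := {ω | X ω ≤ x ∧ Y ω ≤ y} with hA
  set A' : Set Ω := {ω | X ω ≤ x' ∧ Y ω ≤ y'} with hA'
  have hsub : A' ⊆ A := fun ω ⟨h1, h2⟩ => ⟨le_trans h1 hxle, le_trans h2 hyle⟩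
  set N1 : Set Ω := {ω | X ω ≤ x} \ {ω | X ω ≤ x'} with hN1
  set N2 : Set Ω := {ω | Y ω ≤ y} \ {ω | Y ω ≤ y'} with hN2
  have hN1null : ℙ N1 = 0 := by
    have h := measure_diff (μ := ℙ) (s₁ := {ω | X ω ≤ x}) (s₂ := {ω | X ω ≤ x'})
      (fun ω h => le_trans h hxle)
      ((hX measurableSet_Iic).nullMeasurableSet) (measure_ne_top _ _)
    rw [hxeq, tsub_self] at h
    exact h
  have hN2null : ℙ N2 = 0 := by
    have h := measure_diff (μ := ℙ) (s₁ := {ω | Y ω ≤ y}) (s₂ := {ω | Y ω ≤ y'})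
      (fun ω h => le_trans h hyle)
      ((hY measurableSet_Iic).nullMeasurableSet) (measure_ne_top _ _)
    rw [hyeq, tsub_self] at h
    exact h
  have hcover : A ⊆ A' ∪ (N1 ∪ N2) := by
    intro ω ⟨h1, h2⟩
    by_cases hc1 : X ω ≤ x'
    · by_cases hc2 : Y ω ≤ y'
      · exact Or.inl ⟨hc1, hc2⟩
      · exact Or.inr (Or.inr ⟨h2, hc2⟩)
    · exact Or.inr (Or.inl ⟨h1, hc1⟩)
  have h1 : ℙ A ≤ ℙ A' := by
    calc ℙ A ≤ ℙ (A' ∪ (N1 ∪ N2)) := measure_mono hcover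
      _ ≤ ℙ A' + ℙ (N1 ∪ N2) := measure_union_le _ _
      _ ≤ ℙ A' + (ℙ N1 + ℙ N2) := by gcongr; exact measure_union_le _ _
      _ = ℙ A' := by rw [hN1null, hN2null]; simp
  exact le_antisymm (measure_mono hsub) h1
end

section
/- Let μ, σ : ℝ → ℝ be bounded functions and let f : ℝ → ℝ be four times continuously differentiable with compact support. Then there exists a constant K ≥ 0 such that for every h ∈ (0,1] and every x ∈ ℝ, |(A_h f)(x) − (μ(x) f'(x) + ½ σ(x)² f''(x))| ≤ K h². In particular sup_{x ∈ ℝ} |(A_h f)(x) − (A f)(x)| → 0 as h → 0⁺. -/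
open Filter

/-- The discretized diffusion generator
`(A_h f)(x) = ½(σ(x)²/h² + μ(x)/h)(f(x+h) − f(x)) + ½(σ(x)²/h² − μ(x)/h)(f(x−h) − f(x))`. -/
noncomputable def discreteGen (μ σ : ℝ → ℝ) (h : ℝ) (f : ℝ → ℝ) (x : ℝ) : ℝ :=
  (1 / 2) * (σ x ^ 2 / h ^ 2 + μ x / h) * (f (x + h) - f x)
    + (1 / 2) * (σ x ^ 2 / h ^ 2 - μ x / h) * (f (x - h) - f x)

open Set
lemma myIDW {f : ℝ → ℝ} {s : Set ℝ} (hs : UniqueDiffOn ℝ s) {n : ℕ}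
    (hf : ContDiff ℝ 4 f) (hn : n ≤ 4) :
    Set.EqOn (iteratedDerivWithin n f s) (iteratedDeriv n f) s := by
  induction n with
  | zero => simp [Set.EqOn]
  | succ n IH =>
    intro x hx
    have hn' : n ≤ 4 := by omega
    have hd : DifferentiableAt ℝ (iteratedDeriv n f) x := by
      have := hf.differentiable_iteratedDeriv n (by exact_mod_cast (by omega : n < 4) : (n : WithTop ℕ∞) < 4)
      exact this.differentiableAt
    rw [iteratedDerivWithin_succ, iteratedDeriv_succ,
      derivWithin_congr (IH hn') (IH hn' hx), hd.derivWithin (hs x hx)]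

lemma taylor3_bound {f : ℝ → ℝ} (hf : ContDiff ℝ 4 f) {M4 : ℝ}
    (hM4 : ∀ y, |iteratedDeriv 4 f y| ≤ M4) (x h : ℝ) (hh : 0 ≤ h) :
    |f (x + h) - (f x + h * deriv f x + h ^ 2 / 2 * iteratedDeriv 2 f x
      + h ^ 3 / 6 * iteratedDeriv 3 f x)| ≤ M4 * h ^ 4 / 6 := by
  rcases hh.eq_or_lt with rfl | hh
  · have : 0 ≤ M4 := le_trans (abs_nonneg _) (hM4 0)
    simp
  · have hab : x < x + h := by linarith
    have hs := uniqueDiffOn_Icc hab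
    have key := taylor_mean_remainder_bound (f := f) (a := x) (b := x + h) (x := x + h)
      (n := 3) (C := M4) hab.le (hf.contDiffOn) (right_mem_Icc.2 hab.le) ?_
    · rw [taylor_within_apply] at key
      have hx : x ∈ Icc x (x + h) := left_mem_Icc.2 hab.le
      have e1 := myIDW (n := 1) hs hf (by norm_num) hx
      have e2 := myIDW (n := 2) hs hf (by norm_num) hx
      have e3 := myIDW (n := 3) hs hf (by norm_num) hx
      simp only [Finset.sum_range_succ, Finset.sum_range_zero, e1, e2, e3,
        iteratedDerivWithin_zero] at key
      norm_num [iteratedDeriv_one, Real.norm_eq_abs, Nat.factorial] at key ⊢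
      convert key using 2
      ring
    · intro y hy
      rw [show ((3:ℕ)+1) = 4 from rfl, myIDW hs hf le_rfl hy, Real.norm_eq_abs]
      exact hM4 y

lemma taylor3_bound_neg {f : ℝ → ℝ} (hf : ContDiff ℝ 4 f) {M4 : ℝ}
    (hM4 : ∀ y, |iteratedDeriv 4 f y| ≤ M4) (x h : ℝ) (hh : 0 ≤ h) :
    |f (x - h) - (f x - h * deriv f x + h ^ 2 / 2 * iteratedDeriv 2 f x
      - h ^ 3 / 6 * iteratedDeriv 3 f x)| ≤ M4 * h ^ 4 / 6 := by
  set g : ℝ → ℝ := fun t => f (x + -t) with hg_def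
  have hg : ContDiff ℝ 4 g := hf.comp (contDiff_const.add contDiff_id.neg)
  have hiter : ∀ n : ℕ, ∀ t : ℝ, iteratedDeriv n g t = (-1 : ℝ) ^ n * iteratedDeriv n f (x - t) := by
    intro n t
    have h1 := iteratedDeriv_comp_neg n (fun z => f (x + z)) t
    have h2 := iteratedDeriv_comp_const_add n f x
    simp only [hg_def]
    rw [h1, h2]
    simp [smul_eq_mul, sub_eq_add_neg]
  have hM4g : ∀ y, |iteratedDeriv 4 g y| ≤ M4 := by
    intro y; rw [hiter]; norm_num; exact hM4 (x - y)
  have key := taylor3_bound hg hM4g 0 h hh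
  have e0 : g (0 + h) = f (x - h) := by simp [hg_def, sub_eq_add_neg]
  have e0' : g 0 = f x := by simp [hg_def]
  have e1 : deriv g 0 = -deriv f x := by
    have := hiter 1 0
    simpa [iteratedDeriv_one] using this
  have e2 : iteratedDeriv 2 g 0 = iteratedDeriv 2 f x := by simpa using hiter 2 0
  have e3 : iteratedDeriv 3 g 0 = -iteratedDeriv 3 f x := by rw [hiter 3 0]; norm_num
  rw [e0, e0', e1, e2, e3] at key
  convert key using 2
  ring

lemma exists_iter_bound {f : ℝ → ℝ} (hf : ContDiff ℝ 4 f) (hsupp : HasCompactSupport f)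
    (n : ℕ) (hn : n ≤ 4) : ∃ M, 0 ≤ M ∧ ∀ x, |iteratedDeriv n f x| ≤ M := by
  have hcs : HasCompactSupport (iteratedDeriv n f) := by
    induction n with
    | zero => simpa using hsupp
    | succ k IH =>
      rw [iteratedDeriv_succ]
      exact (IH (by omega)).deriv
  have hcont : Continuous (iteratedDeriv n f) :=
    hf.continuous_iteratedDeriv n (by exact_mod_cast (hn : n ≤ 4))
  obtain ⟨C, hC⟩ := hcs.exists_bound_of_continuous hcont
  exact ⟨C, le_trans (norm_nonneg _) (hC 0), fun x => by simpa [Real.norm_eq_abs] using hC x⟩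


set_option maxHeartbeats 1000000 in
lemma key_bound (μ σ : ℝ → ℝ) (Mμ Mσ : ℝ)
    (hμ : ∀ x, |μ x| ≤ Mμ) (hσ : ∀ x, |σ x| ≤ Mσ)
    (f : ℝ → ℝ) (M3 M4 : ℝ) (hM3 : ∀ y, |iteratedDeriv 3 f y| ≤ M3)
    (hM4 : ∀ y, |iteratedDeriv 4 f y| ≤ M4) (hf : ContDiff ℝ 4 f)
    (h : ℝ) (hh : h ∈ Set.Ioc (0:ℝ) 1) (x : ℝ) :
    |discreteGen μ σ h f x - (μ x * deriv f x + (1 / 2) * σ x ^ 2 * iteratedDeriv 2 f x)|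
      ≤ (Mμ * M3 / 6 + (Mσ ^ 2 + Mμ) * M4 / 6) * h ^ 2 := by
  obtain ⟨hh0, hh1⟩ := hh
  have hne : h ≠ 0 := ne_of_gt hh0
  set f1 := deriv f x
  set f2 := iteratedDeriv 2 f x
  set f3 := iteratedDeriv 3 f x
  set P := f (x + h) - (f x + h * f1 + h ^ 2 / 2 * f2 + h ^ 3 / 6 * f3) with hP_def
  set Q := f (x - h) - (f x - h * f1 + h ^ 2 / 2 * f2 - h ^ 3 / 6 * f3) with hQ_def
  have hP : |P| ≤ M4 * h ^ 4 / 6 := taylor3_bound hf hM4 x h hh0.le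
  have hQ : |Q| ≤ M4 * h ^ 4 / 6 := taylor3_bound_neg hf hM4 x h hh0.le
  have hfp : f (x + h) = P + (f x + h * f1 + h ^ 2 / 2 * f2 + h ^ 3 / 6 * f3) := by
    rw [hP_def]; ring
  have hfm : f (x - h) = Q + (f x - h * f1 + h ^ 2 / 2 * f2 - h ^ 3 / 6 * f3) := by
    rw [hQ_def]; ring
  have hE : discreteGen μ σ h f x - (μ x * f1 + (1 / 2) * σ x ^ 2 * f2)
      = μ x * (h ^ 2 / 6 * f3)
        + (1 / 2) * (σ x ^ 2 / h ^ 2 + μ x / h) * P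
        + (1 / 2) * (σ x ^ 2 / h ^ 2 - μ x / h) * Q := by
    rw [discreteGen, hfp, hfm]
    field_simp
    ring
  rw [hE]
  have hMμ : 0 ≤ Mμ := le_trans (abs_nonneg _) (hμ 0)
  have hM4' : 0 ≤ M4 := le_trans (abs_nonneg _) (hM4 0)
  have hσ2 : σ x ^ 2 ≤ Mσ ^ 2 := by
    have := hσ x
    nlinarith [abs_nonneg (σ x), sq_abs (σ x)]
  have hσ0 : (0:ℝ) ≤ σ x ^ 2 := sq_nonneg _
  have t1 : |μ x * (h ^ 2 / 6 * f3)| ≤ Mμ * (h ^ 2 / 6 * M3) := by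
    rw [abs_mul, abs_mul]
    have : |h ^ 2 / 6| = h ^ 2 / 6 := abs_of_nonneg (by positivity)
    rw [this]
    gcongr
    · exact hμ x
    · exact hM3 x
  have habs2 : |(1 / 2) * (σ x ^ 2 / h ^ 2 + μ x / h)| ≤ (1/2) * (Mσ ^ 2 / h ^ 2 + Mμ / h) := by
    rw [abs_mul]
    rw [abs_of_nonneg (by norm_num : (0:ℝ) ≤ 1/2)]
    gcongr
    calc |σ x ^ 2 / h ^ 2 + μ x / h| ≤ |σ x ^ 2 / h ^ 2| + |μ x / h| := abs_add_le _ _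
      _ = σ x ^ 2 / h ^ 2 + |μ x| / h := by
          rw [abs_div, abs_div, abs_of_nonneg hσ0, abs_of_pos hh0,
            abs_of_nonneg (by positivity : (0:ℝ) ≤ h ^ 2)]
      _ ≤ Mσ ^ 2 / h ^ 2 + Mμ / h := by gcongr; exact hμ x
  have habs3 : |(1 / 2) * (σ x ^ 2 / h ^ 2 - μ x / h)| ≤ (1/2) * (Mσ ^ 2 / h ^ 2 + Mμ / h) := by
    rw [abs_mul]
    rw [abs_of_nonneg (by norm_num : (0:ℝ) ≤ 1/2)]
    gcongr
    calc |σ x ^ 2 / h ^ 2 - μ x / h| ≤ |σ x ^ 2 / h ^ 2| + |μ x / h| := abs_sub _ _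
      _ = σ x ^ 2 / h ^ 2 + |μ x| / h := by
          rw [abs_div, abs_div, abs_of_nonneg hσ0, abs_of_pos hh0,
            abs_of_nonneg (by positivity : (0:ℝ) ≤ h ^ 2)]
      _ ≤ Mσ ^ 2 / h ^ 2 + Mμ / h := by gcongr; exact hμ x
  have t2 : |(1 / 2) * (σ x ^ 2 / h ^ 2 + μ x / h) * P|
      ≤ (1/2) * (Mσ ^ 2 / h ^ 2 + Mμ / h) * (M4 * h ^ 4 / 6) := by
    rw [abs_mul]
    exact mul_le_mul habs2 hP (abs_nonneg _) (by positivity)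
  have t3 : |(1 / 2) * (σ x ^ 2 / h ^ 2 - μ x / h) * Q|
      ≤ (1/2) * (Mσ ^ 2 / h ^ 2 + Mμ / h) * (M4 * h ^ 4 / 6) := by
    rw [abs_mul]
    exact mul_le_mul habs3 hQ (abs_nonneg _) (by positivity)
  have simp2 : (1/2) * (Mσ ^ 2 / h ^ 2 + Mμ / h) * (M4 * h ^ 4 / 6)
      = (Mσ ^ 2 * h ^ 2 + Mμ * h ^ 3) * M4 / 12 := by
    field_simp
    ring
  have hMσ2 : (0:ℝ) ≤ Mσ ^ 2 := sq_nonneg _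
  have hh3 : h ^ 3 ≤ h ^ 2 := by nlinarith
  have hM3' : 0 ≤ M3 := le_trans (abs_nonneg _) (hM3 0)
  calc |μ x * (h ^ 2 / 6 * f3)
        + (1 / 2) * (σ x ^ 2 / h ^ 2 + μ x / h) * P
        + (1 / 2) * (σ x ^ 2 / h ^ 2 - μ x / h) * Q|
      ≤ |μ x * (h ^ 2 / 6 * f3)| + |(1 / 2) * (σ x ^ 2 / h ^ 2 + μ x / h) * P|
        + |(1 / 2) * (σ x ^ 2 / h ^ 2 - μ x / h) * Q| := by
        exact le_trans (abs_add_le _ _) (by gcongr; exact abs_add_le _ _)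
    _ ≤ Mμ * (h ^ 2 / 6 * M3) + (Mσ ^ 2 * h ^ 2 + Mμ * h ^ 3) * M4 / 12
        + (Mσ ^ 2 * h ^ 2 + Mμ * h ^ 3) * M4 / 12 := by
        rw [← simp2]; exact add_le_add (add_le_add t1 t2) t3
    _ ≤ (Mμ * M3 / 6 + (Mσ ^ 2 + Mμ) * M4 / 6) * h ^ 2 := by nlinarith [mul_nonneg hMμ hM4']

/-- For bounded coefficients `μ, σ` and a `C⁴` function `f` with compact support, the
discretized generator approximates the diffusion generator
`(A f)(x) = μ(x) f'(x) + ½ σ(x)² f''(x)` uniformly at rate `h²`; in particular the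
uniform error tends to `0` as `h → 0⁺`. -/
theorem discreteGen_uniform_convergence
    (μ σ : ℝ → ℝ) (Mμ Mσ : ℝ)
    (hμ : ∀ x, |μ x| ≤ Mμ) (hσ : ∀ x, |σ x| ≤ Mσ)
    (f : ℝ → ℝ) (hf : ContDiff ℝ 4 f) (hsupp : HasCompactSupport f) :
    (∃ K : ℝ, 0 ≤ K ∧ ∀ h ∈ Set.Ioc (0:ℝ) 1, ∀ x : ℝ,
        |discreteGen μ σ h f x - (μ x * deriv f x + (1 / 2) * σ x ^ 2 * iteratedDeriv 2 f x)|
          ≤ K * h ^ 2) ∧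
      Tendsto (fun h : ℝ => ⨆ x : ℝ,
          |discreteGen μ σ h f x - (μ x * deriv f x + (1 / 2) * σ x ^ 2 * iteratedDeriv 2 f x)|)
        (nhdsWithin 0 (Set.Ioi 0)) (nhds 0) := by
  obtain ⟨M3, hM3n, hM3⟩ := exists_iter_bound hf hsupp 3 (by norm_num)
  obtain ⟨M4, hM4n, hM4⟩ := exists_iter_bound hf hsupp 4 le_rfl
  have hMμ : 0 ≤ Mμ := le_trans (abs_nonneg _) (hμ 0)
  set K : ℝ := Mμ * M3 / 6 + (Mσ ^ 2 + Mμ) * M4 / 6 with hK_def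
  have hK0 : 0 ≤ K :=
    add_nonneg (div_nonneg (mul_nonneg hMμ hM3n) (by norm_num))
      (div_nonneg (mul_nonneg (add_nonneg (sq_nonneg _) hMμ) hM4n) (by norm_num))
  have hkey : ∀ h ∈ Set.Ioc (0:ℝ) 1, ∀ x : ℝ,
      |discreteGen μ σ h f x - (μ x * deriv f x + (1 / 2) * σ x ^ 2 * iteratedDeriv 2 f x)|
        ≤ K * h ^ 2 := fun h hh x => key_bound μ σ Mμ Mσ hμ hσ f M3 M4 hM3 hM4 hf h hh x
  refine ⟨⟨K, hK0, hkey⟩, ?_⟩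
  have ev1 : ∀ᶠ h : ℝ in nhdsWithin 0 (Set.Ioi 0), 0 ≤ ⨆ x : ℝ,
      |discreteGen μ σ h f x - (μ x * deriv f x + (1 / 2) * σ x ^ 2 * iteratedDeriv 2 f x)| :=
    Filter.Eventually.of_forall fun h => Real.iSup_nonneg fun x => abs_nonneg _
  have ev2 : ∀ᶠ h : ℝ in nhdsWithin 0 (Set.Ioi 0), (⨆ x : ℝ,
      |discreteGen μ σ h f x - (μ x * deriv f x + (1 / 2) * σ x ^ 2 * iteratedDeriv 2 f x)|)
        ≤ K * h ^ 2 := by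
    filter_upwards [Ioc_mem_nhdsGT_of_mem (by norm_num : (0:ℝ) ∈ Set.Ico (0:ℝ) 1)] with h hh
    exact ciSup_le fun x => hkey h hh x
  have htend : Tendsto (fun h : ℝ => K * h ^ 2) (nhdsWithin 0 (Set.Ioi 0)) (nhds 0) := by
    have : Tendsto (fun h : ℝ => K * h ^ 2) (nhds 0) (nhds (K * 0 ^ 2)) :=
      (continuous_const.mul (continuous_pow 2)).tendsto 0
    simpa using this.mono_left nhdsWithin_le_nhds
  exact squeeze_zero' ev1 ev2 htend
end
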